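/- Let n ≥ 2 and let s₁, …, s_{n−1} ∈ S_n be the adjacent transpositions s_i = (i, i+1). For any permutation π of {1, …, n−1}, the product s_{π(1)} s_{π(2)} ⋯ s_{π(n−1)} is an n-cycle; in particular its Coxeter length (number of inversions) equals n − 1, so the expression is reduced. -/

import Mathlib

open Equiv Equiv.Perm

namespace CoxAux

/-- adjacent transposition on ℕ -/
def sN (i : ℕ) : Perm ℕ := Equiv.swap i (i + 1)

/-- product of adjacent transpositions indexed by a list -/
def WN (l : List ℕ) : Perm ℕ := (l.map sN).prod

/-- inversion set, within range M -/
def InvN (w : Perm ℕ) (M : ℕ) : Finset (ℕ × ℕ) :=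
  (Finset.range M ×ˢ Finset.range M).filter fun p => p.1 < p.2 ∧ w p.2 < w p.1

@[simp] lemma WN_nil : WN [] = 1 := rfl

@[simp] lemma WN_cons (i : ℕ) (t : List ℕ) : WN (i :: t) = sN i * WN t := by
  simp [WN]

lemma WN_append (l₁ l₂ : List ℕ) : WN (l₁ ++ l₂) = WN l₁ * WN l₂ := by
  simp [WN]

/-- L1: if all letters are small, WN fixes large points -/
lemma WN_fix {l : List ℕ} {M : ℕ} (hl : ∀ i ∈ l, i + 1 < M) :
    ∀ x, M ≤ x → WN l x = x := by
  induction l with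
  | nil => intro x _; simp
  | cons i t ih =>
    intro x hx
    have hi := hl i (by simp)
    have ht : ∀ j ∈ t, j + 1 < M := fun j hj => hl j (by simp [hj])
    have h1 : WN t x = x := ih ht x hx
    simp only [WN_cons, Equiv.Perm.mul_apply, h1, sN]
    exact Equiv.swap_apply_of_ne_of_ne (by omega) (by omega)

/-- L2 -/
lemma lt_of_fix {v : Perm ℕ} {N : ℕ} (hfix : ∀ x, N ≤ x → v x = x) {p : ℕ}
    (hp : p < N) : v p < N := by
  by_contra h
  push_neg at h
  have := hfix (v p) h
  have := v.injective this
  omega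

/-- L4 -/
lemma InvN_stable {v : Perm ℕ} {N M : ℕ} (hfix : ∀ x, N ≤ x → v x = x)
    (hNM : N ≤ M) : InvN v M = InvN v N := by
  ext ⟨p, q⟩
  simp only [InvN, Finset.mem_filter, Finset.mem_product, Finset.mem_range]
  constructor
  · rintro ⟨⟨hp, hq⟩, hlt, hw⟩
    have hqN : q < N := by
      by_contra h
      push_neg at h
      have hvq : v q = q := hfix q h
      by_cases hpN : N ≤ p
      · have := hfix p hpN; omega
      · push_neg at hpN
        have := lt_of_fix hfix hpN
        omega
    exact ⟨⟨by omega, hqN⟩, hlt, hw⟩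
  · rintro ⟨⟨hp, hq⟩, hlt, hw⟩
    exact ⟨⟨by omega, by omega⟩, hlt, hw⟩

/-- L5: left-multiplying by swap a N (a in range, N on boundary fixed by v) adds
at least one inversion. -/
lemma inv_step {v : Perm ℕ} {N a : ℕ} (hfix : ∀ x, N ≤ x → v x = x) (ha : a < N) :
    (InvN v (N + 1)).card + 1 ≤ (InvN (Equiv.swap a N * v) (N + 1)).card := by
  set w := Equiv.swap a N * v with hw
  set b := v⁻¹ a with hb
  have hvb : v b = a := v.apply_symm_apply a
  have hbN : b < N := by
    by_contra h
    push_neg at h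
    have := hfix b h
    omega
  have hwb : w b = N := by
    simp [hw, Equiv.Perm.mul_apply, hvb]
  have hwN : w N = a := by
    simp [hw, Equiv.Perm.mul_apply, hfix N le_rfl]
  have hwother : ∀ x, x ≠ b → x < N → w x = v x := by
    intro x hxb hxN
    have h1 : v x ≠ a := by
      intro h
      apply hxb
      rw [hb, ← h, Equiv.Perm.inv_def, Equiv.symm_apply_apply]
    have h2 : v x ≠ N := by
      have := lt_of_fix hfix hxN; omega
    simp [hw, Equiv.Perm.mul_apply, Equiv.swap_apply_of_ne_of_ne h1 h2]
  -- elements of InvN v (N+1) have both coordinates < N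
  have hmemv : ∀ p q : ℕ, (p, q) ∈ InvN v (N + 1) → p < q ∧ q < N ∧ v q < v p := by
    rintro p q hm
    simp only [InvN, Finset.mem_filter, Finset.mem_product, Finset.mem_range] at hm
    obtain ⟨⟨hp, hq⟩, hlt, hinv⟩ := hm
    have hqN : q < N := by
      by_contra h
      push_neg at h
      have hvq : v q = q := hfix q h
      have hpN : p < N := by omega
      have := lt_of_fix hfix hpN
      omega
    exact ⟨hlt, hqN, hinv⟩
  have hbNmem : (b, N) ∈ InvN w (N + 1) := by
    simp only [InvN, Finset.mem_filter, Finset.mem_product, Finset.mem_range]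
    refine ⟨⟨by omega, by omega⟩, hbN, ?_⟩
    rw [hwb, hwN]; omega
  -- injection
  have hinj : ∀ p ∈ InvN v (N + 1),
      (fun p : ℕ × ℕ => if p.2 = b then (p.1, N) else p) p ∈
        (InvN w (N + 1)).erase (b, N) := by
    rintro ⟨p, q⟩ hm
    obtain ⟨hlt, hqN, hinv⟩ := hmemv p q hm
    have hpN : p < N := by omega
    dsimp only
    by_cases hqb : q = b
    · rw [if_pos hqb]
      have hpb : p ≠ b := by omega
      have hwp : w p = v p := hwother p hpb hpN
      refine Finset.mem_erase.mpr ⟨by simp only [ne_eq, Prod.mk.injEq, not_and]; intro h; omega, ?_⟩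
      simp only [InvN, Finset.mem_filter, Finset.mem_product, Finset.mem_range]
      refine ⟨⟨by omega, by omega⟩, by omega, ?_⟩
      rw [hwN, hwp]
      have : v q = a := by rw [hqb, hvb]
      omega
    · rw [if_neg hqb]
      refine Finset.mem_erase.mpr ⟨by simp only [ne_eq, Prod.mk.injEq, not_and]; intro _; omega, ?_⟩
      simp only [InvN, Finset.mem_filter, Finset.mem_product, Finset.mem_range]
      refine ⟨⟨by omega, by omega⟩, hlt, ?_⟩
      have hwq : w q = v q := hwother q hqb hqN
      by_cases hpb : p = b
      · subst hpb
        rw [hwb, hwq]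
        have := lt_of_fix hfix hqN
        omega
      · rw [hwq, hwother p hpb hpN]
        exact hinv
  have hinjOn : Set.InjOn (fun p : ℕ × ℕ => if p.2 = b then (p.1, N) else p)
      (InvN v (N + 1)) := by
    rintro ⟨p, q⟩ hpq ⟨p', q'⟩ hpq' heq
    obtain ⟨_, hq, _⟩ := hmemv p q hpq
    obtain ⟨_, hq', _⟩ := hmemv p' q' hpq'
    simp only at heq
    split_ifs at heq with h1 h2 h2 <;> 
      simp_all [Prod.ext_iff] <;> omega
  have hcard : (InvN v (N + 1)).card ≤ ((InvN w (N + 1)).erase (b, N)).card :=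
    Finset.card_le_card_of_injOn _ hinj hinjOn
  have := Finset.card_erase_add_one hbNmem
  omega

/-- upper bound: number of inversions is at most the word length -/
lemma InvN_WN_le (l : List ℕ) (M : ℕ) : (InvN (WN l) M).card ≤ l.length := by
  induction l with
  | nil =>
    have h0 : InvN (1 : Perm ℕ) M = ∅ := by
      ext ⟨p, q⟩
      simp only [InvN, Finset.mem_filter, Finset.notMem_empty, iff_false]
      simp only [Equiv.Perm.one_apply]
      rintro ⟨_, h1, h2⟩
      omega
    simp [h0]
  | cons i t ih =>
    have h1 : WN (i :: t) = sN i * WN t := by simp [WN]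
    have hsub : InvN (sN i * WN t) M ⊆
        insert ((WN t)⁻¹ i, (WN t)⁻¹ (i + 1)) (InvN (WN t) M) := by
      rintro ⟨p, q⟩ (h : (p, q) ∈ InvN (sN i * WN t) M)
      rw [InvN, Finset.mem_filter] at h
      simp only [Finset.mem_product, Finset.mem_range, Equiv.Perm.mul_apply] at h
      obtain ⟨⟨hp, hq⟩, hlt, hw⟩ := h
      have key : WN t q < WN t p ∨ (WN t p = i ∧ WN t q = i + 1) := by
        simp only [sN, Equiv.swap_apply_def] at hw
        split_ifs at hw <;> omega
      rcases key with hk | ⟨ha1, ha2⟩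
      · exact Finset.mem_insert_of_mem (by
          simp only [InvN, Finset.mem_filter, Finset.mem_product, Finset.mem_range]
          exact ⟨⟨hp, hq⟩, hlt, hk⟩)
      · have hp' : p = (WN t)⁻¹ i := by rw [Equiv.Perm.eq_inv_iff_eq]; exact ha1
        have hq' : q = (WN t)⁻¹ (i + 1) := by rw [Equiv.Perm.eq_inv_iff_eq]; exact ha2
        subst hp'; subst hq'
        exact Finset.mem_insert_self _ _
    calc (InvN (WN (i :: t)) M).card = (InvN (sN i * WN t) M).card := by rw [h1]
      _ ≤ (insert ((WN t)⁻¹ i, (WN t)⁻¹ (i + 1)) (InvN (WN t) M)).card :=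
          Finset.card_le_card hsub
      _ ≤ (InvN (WN t) M).card + 1 := Finset.card_insert_le _ _
      _ ≤ t.length + 1 := by omega
      _ = (i :: t).length := by simp

/-- L6: extending a cycle on {0,...,N-1} by swapping in the new point N. -/
lemma cycle_step {v : Perm ℕ} {N a : ℕ} (hv : v.IsCycle)
    (hsupp : ∀ x, v x ≠ x ↔ x < N) (ha : a < N) :
    (Equiv.swap a N * v).IsCycle ∧ ∀ x, (Equiv.swap a N * v) x ≠ x ↔ x < N + 1 := by
  set w := Equiv.swap a N * v with hw
  have hfix : ∀ x, N ≤ x → v x = x := by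
    intro x hx
    by_contra h
    have := (hsupp x).mp h
    omega
  set b := v⁻¹ a with hb
  have hvb : v b = a := v.apply_symm_apply a
  have hbN : b < N := by
    by_contra h
    push_neg at h
    have := hfix b h
    omega
  have hwb : w b = N := by simp [hw, Equiv.Perm.mul_apply, hvb]
  have hwN : w N = a := by simp [hw, Equiv.Perm.mul_apply, hfix N le_rfl]
  have hwother : ∀ x, x ≠ b → x < N → w x = v x := by
    intro x hxb hxN
    have h1 : v x ≠ a := by
      intro h
      apply hxb
      rw [hb, ← h, Equiv.Perm.inv_def, Equiv.symm_apply_apply]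
    have h2 : v x ≠ N := by
      have := lt_of_fix hfix hxN; omega
    simp [hw, Equiv.Perm.mul_apply, Equiv.swap_apply_of_ne_of_ne h1 h2]
  have hwfix : ∀ x, N + 1 ≤ x → w x = x := by
    intro x hx
    have h1 : v x = x := hfix x (by omega)
    simp [hw, Equiv.Perm.mul_apply, h1,
      Equiv.swap_apply_of_ne_of_ne (by omega : x ≠ a) (by omega : x ≠ N)]
  -- powers of v stay in range
  have hpow : ∀ k : ℕ, (v ^ k) a < N := by
    intro k
    induction k with
    | zero => simpa using ha
    | succ k ih =>
      rw [pow_succ', Equiv.Perm.mul_apply]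
      exact lt_of_fix hfix ih
  -- natural powers of v from a are w-samecycle with a
  have hclaim : ∀ k : ℕ, (w : Perm ℕ).SameCycle a ((v ^ k) a) := by
    intro k
    induction k with
    | zero => simpa using Equiv.Perm.SameCycle.refl w a
    | succ k ih =>
      rw [pow_succ', Equiv.Perm.mul_apply]
      by_cases hz : (v ^ k) a = b
      · rw [hz, hvb]
      · have hzN : (v ^ k) a < N := hpow k
        have : w ((v ^ k) a) = v ((v ^ k) a) := hwother _ hz hzN
        exact ih.trans ⟨1, by simpa using this⟩
  -- period of a under v
  have hperiod : ∃ m : ℕ, 0 < m ∧ (v ^ m) a = a := by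
    have hmaps : ∀ k ∈ Finset.range (N + 1), (v ^ k) a ∈ Finset.range N := by
      intro k _
      exact Finset.mem_range.mpr (hpow k)
    obtain ⟨i, _, j, _, hij, heq⟩ :=
      Finset.exists_ne_map_eq_of_card_lt_of_maps_to
        (by simp : (Finset.range N).card < (Finset.range (N + 1)).card) hmaps
    rcases Nat.lt_or_ge i j with hlt | hge
    · refine ⟨j - i, by omega, ?_⟩
      have : (v ^ i) ((v ^ (j - i)) a) = (v ^ i) a := by
        rw [← Equiv.Perm.mul_apply, ← pow_add]
        rw [show i + (j - i) = j by omega]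
        exact heq.symm
      exact (v ^ i).injective this
    · have hgt : j < i := by omega
      refine ⟨i - j, by omega, ?_⟩
      have : (v ^ j) ((v ^ (i - j)) a) = (v ^ j) a := by
        rw [← Equiv.Perm.mul_apply, ← pow_add]
        rw [show j + (i - j) = i by omega]
        exact heq
      exact (v ^ j).injective this
  -- z-powers reduce to nat powers at a
  have hzpow : ∀ k : ℤ, ∃ r : ℕ, (v ^ k) a = (v ^ r) a := by
    obtain ⟨m, hm, hma⟩ := hperiod
    intro k
    refine ⟨(k % (m : ℤ)).toNat, ?_⟩
    have hm0 : (m : ℤ) ≠ 0 := by exact_mod_cast hm.ne'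
    have hmod : 0 ≤ k % (m : ℤ) := Int.emod_nonneg k hm0
    have hk : k = (m : ℤ) * (k / (m : ℤ)) + k % (m : ℤ) := (Int.mul_ediv_add_emod k m).symm
    have h1 : (v ^ k) a = (v ^ ((m : ℤ) * (k / (m : ℤ)))) ((v ^ (k % (m : ℤ))) a) := by
      rw [← Equiv.Perm.mul_apply, ← zpow_add, ← hk]
    have h2 : (v ^ (k % (m : ℤ))) a = (v ^ (k % (m : ℤ)).toNat) a := by
      rw [← zpow_natCast, Int.toNat_of_nonneg hmod]
    have h3 : (v ^ m) ((v ^ (k % (m : ℤ)).toNat) a) = (v ^ (k % (m : ℤ)).toNat) a := by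
      rw [← Equiv.Perm.mul_apply, pow_mul_comm, Equiv.Perm.mul_apply, hma]
    have h4 : (v ^ ((m : ℤ) * (k / (m : ℤ)))) ((v ^ (k % (m : ℤ)).toNat) a)
        = (v ^ (k % (m : ℤ)).toNat) a := by
      rw [zpow_mul, zpow_natCast]
      exact Equiv.Perm.zpow_apply_eq_self_of_apply_eq_self h3 _
    rw [h1, h2, h4]
  -- every moved point of v is a nat power of a
  have hreach : ∀ y, y < N → ∃ r : ℕ, (v ^ r) a = y := by
    intro y hy
    have h1 : v a ≠ a := (hsupp a).mpr ha
    have h2 : v y ≠ y := (hsupp y).mpr hy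
    obtain ⟨k, hk⟩ := hv.sameCycle h1 h2
    obtain ⟨r, hr⟩ := hzpow k
    exact ⟨r, by rw [← hr]; exact hk⟩
  have hcycle : w.IsCycle := by
    have hwa : w a ≠ a := by
      by_cases hab : a = b
      · rw [← hab] at hwb; omega
      · rw [hwother a hab ha]
        exact (hsupp a).mpr ha
    refine ⟨a, hwa, ?_⟩
    intro y hy
    have hyN : y < N + 1 := by
      by_contra h
      push_neg at h
      exact hy (hwfix y h)
    rcases Nat.lt_or_ge y N with hyN' | hyN'
    · obtain ⟨r, hr⟩ := hreach y hyN'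
      simpa [hr] using hclaim r
    · have hyeq : y = N := by omega
      subst hyeq
      obtain ⟨r, hr⟩ := hreach b hbN
      have h1 : w.SameCycle a b := by simpa [hr] using hclaim r
      exact h1.trans ⟨1, by simpa using hwb⟩
  refine ⟨hcycle, ?_⟩
  intro x
  constructor
  · intro hx
    by_contra h
    push_neg at h
    exact hx (hwfix x h)
  · intro hx
    rcases Nat.lt_or_ge x N with hxN | hxN
    · by_cases hxb : x = b
      · rw [hxb, hwb]; omega
      · rw [hwother x hxb hxN]
        exact (hsupp x).mpr hxN
    · have : x = N := by omega
      rw [this, hwN]; omega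

lemma key : ∀ n : ℕ, 1 ≤ n → ∀ l : List ℕ, l.Perm (List.range n) →
    (WN l).IsCycle ∧ (∀ x, WN l x ≠ x ↔ x < n + 1) ∧ (InvN (WN l) (n + 1)).card = n := by
  intro n hn
  induction n, hn using Nat.le_induction with
  | base =>
    intro l hl
    have hr : List.range 1 = [0] := rfl
    rw [hr] at hl
    have hl' : l = [0] := List.perm_singleton.mp hl
    subst hl'
    have hW : WN [0] = Equiv.swap 0 1 := by simp [WN, sN]
    rw [hW]
    refine ⟨Equiv.Perm.isCycle_swap (by omega), ?_, ?_⟩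
    · intro x
      match x with
      | 0 => simp
      | 1 => simp [Equiv.swap_apply_right]
      | (x + 2) =>
        simp [Equiv.swap_apply_of_ne_of_ne (by omega : x + 2 ≠ 0) (by omega : x + 2 ≠ 1)]
    · have : InvN (Equiv.swap 0 1) 2 = {(0, 1)} := by
        ext ⟨p, q⟩
        simp only [InvN, Finset.mem_filter, Finset.mem_product, Finset.mem_range,
          Finset.mem_singleton, Prod.mk.injEq]
        constructor
        · rintro ⟨⟨hp, hq⟩, hlt, _⟩
          omega
        · rintro ⟨rfl, rfl⟩
          simp [Equiv.swap_apply_right]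
      rw [this]
      simp
  | succ n hn ih =>
    intro l hl
    -- the letter n occurs in l
    have hmem : n ∈ l := hl.mem_iff.mpr (by simp)
    obtain ⟨l₁, l₂, rfl⟩ := List.append_of_mem hmem
    have hperm' : (l₁ ++ l₂).Perm (List.range n) := by
      have h1 : (l₁ ++ n :: l₂).Perm (n :: (l₁ ++ l₂)) := List.perm_middle
      have h2 : (List.range (n + 1)).Perm (n :: List.range n) := by
        rw [List.range_succ]
        exact List.perm_append_singleton _ _
      exact (h1.symm.trans (hl.trans h2)).cons_inv
    have hsmall : ∀ i ∈ l₁ ++ l₂, i + 1 < n + 1 := by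
      intro i hi
      have := hperm'.mem_iff.mp hi
      simp only [List.mem_range] at this
      omega
    have hsmall₁ : ∀ i ∈ l₁, i + 1 < n + 1 := fun i hi => hsmall i (by simp [hi])
    obtain ⟨hvc, hvsupp, hvinv⟩ := ih (l₁ ++ l₂) hperm'
    set v := WN (l₁ ++ l₂) with hv
    set P := WN l₁ with hP
    set a := P n with haP
    have hPfix : ∀ x, n + 1 ≤ x → P x = x := WN_fix hsmall₁
    have ha : a < n + 1 := lt_of_fix hPfix (by omega)
    have hvfix : ∀ x, n + 1 ≤ x → v x = x := WN_fix hsmall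
    -- decomposition
    have hdecomp : WN (l₁ ++ n :: l₂) = Equiv.swap a (n + 1) * v := by
      have h1 : WN (l₁ ++ n :: l₂) = P * (sN n * WN l₂) := by
        rw [hP]
        simp [WN]
      have h2 : Equiv.swap a (n + 1) = P * sN n * P⁻¹ := by
        have := Equiv.swap_apply_apply P n (n + 1)
        rw [hPfix (n + 1) le_rfl] at this
        rw [haP, sN]
        exact this
      rw [h1, h2, hv, WN_append, ← hP]
      group
    rw [hdecomp]
    obtain ⟨hwc, hwsupp⟩ := cycle_step hvc hvsupp ha
    refine ⟨hwc, hwsupp, ?_⟩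
    have hlow : (InvN v (n + 1 + 1)).card + 1 ≤
        (InvN (Equiv.swap a (n + 1) * v) (n + 1 + 1)).card := inv_step hvfix ha
    have hstab : InvN v (n + 1 + 1) = InvN v (n + 1) := InvN_stable hvfix (by omega)
    have hhigh : (InvN (WN (l₁ ++ n :: l₂)) (n + 1 + 1)).card ≤ (l₁ ++ n :: l₂).length :=
      InvN_WN_le _ _
    have hlen : (l₁ ++ n :: l₂).length = n + 1 := by
      rw [hl.length_eq, List.length_range]
    rw [hdecomp] at hhigh
    rw [hstab, hvinv] at hlow
    omega

end CoxAux

open CoxAux Equiv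

def invLength {m : ℕ} (w : Perm (Fin m)) : ℕ :=
  (Finset.univ.filter (fun p : Fin m × Fin m => p.1 < p.2 ∧ w p.2 < w p.1)).card

/-- In `S_{n+1}` (with `n ≥ 1`), the product of all `n` adjacent transpositions
`s_i = (i, i+1)`, each occurring exactly once, in any order given by a permutation `π`
of the index set, is an `(n+1)`-cycle; in particular its Coxeter length (number of
inversions) equals `n`, so the expression is reduced. -/
theorem coxeter_element_isCycle (n : ℕ) (hn : 1 ≤ n) (π : Perm (Fin n)) :
    ((List.ofFn fun i : Fin n =>
        Equiv.swap ((π i).castSucc) ((π i).succ)).prod : Perm (Fin (n + 1))).IsCycle ∧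
      ((List.ofFn fun i : Fin n =>
        Equiv.swap ((π i).castSucc) ((π i).succ)).prod : Perm (Fin (n + 1))).support =
        Finset.univ ∧
      invLength ((List.ofFn fun i : Fin n =>
        Equiv.swap ((π i).castSucc) ((π i).succ)).prod : Perm (Fin (n + 1))) = n := by
  classical
  set wfin : Perm (Fin (n + 1)) :=
    (List.ofFn fun i : Fin n => Equiv.swap ((π i).castSucc) ((π i).succ)).prod with hwfin
  set e : Fin (n + 1) ≃ {x : ℕ // x < n + 1} := Fin.equivSubtype with he
  set φ : Perm (Fin (n + 1)) →* Perm ℕ := Equiv.Perm.extendDomainHom e with hφ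
  have hφ_apply : ∀ (u : Perm (Fin (n + 1))) (x : Fin (n + 1)),
      φ u (x : ℕ) = ((u x : Fin (n + 1)) : ℕ) := by
    intro u x
    have h1 : φ u (x : ℕ) = u.extendDomain e (x : ℕ) := rfl
    rw [h1, Equiv.Perm.extendDomain_apply_subtype u e x.isLt]
    congr
  have hφ_fix : ∀ (u : Perm (Fin (n + 1))) (x : ℕ), ¬x < n + 1 → φ u x = x := by
    intro u x hx
    exact Equiv.Perm.extendDomain_apply_not_subtype u e hx
  -- the list of indices
  set l : List ℕ := List.ofFn (fun i : Fin n => ((π i : Fin n) : ℕ)) with hldef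
  have hlnodup : l.Nodup := by
    rw [hldef, List.nodup_ofFn]
    exact Fin.val_injective.comp π.injective
  have hlsub : l ⊆ List.range n := by
    intro x hx
    rw [hldef, List.mem_ofFn] at hx
    obtain ⟨i, rfl⟩ := hx
    simp [List.mem_range, Fin.is_lt]
  have hl : l.Perm (List.range n) := by
    refine (List.subperm_of_subset hlnodup hlsub).perm_of_length_le ?_
    simp [hldef]
  -- φ maps wfin to WN l
  have hφswap : ∀ j : Fin n,
      φ (Equiv.swap ((j : Fin n)).castSucc ((j : Fin n)).succ)
        = sN (j : ℕ) := by
    intro j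
    ext x
    by_cases hx : x < n + 1
    · have h1 : φ (Equiv.swap (j.castSucc) (j.succ)) x
          = ((Equiv.swap (j.castSucc) (j.succ) ⟨x, hx⟩ : Fin (n + 1)) : ℕ) := by
        have := hφ_apply (Equiv.swap (j.castSucc) (j.succ)) ⟨x, hx⟩
        simpa using this
      rw [h1, sN]
      rcases eq_or_ne x (j : ℕ) with hxe | hxe
      · subst hxe
        have h2 : (⟨(j : ℕ), hx⟩ : Fin (n + 1)) = j.castSucc := by
          ext; simp
        rw [h2, Equiv.swap_apply_left, Equiv.swap_apply_left, Fin.val_succ]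
      · rcases eq_or_ne x ((j : ℕ) + 1) with hxe2 | hxe2
        · subst hxe2
          have h2 : (⟨(j : ℕ) + 1, hx⟩ : Fin (n + 1)) = j.succ := by
            ext; simp
          rw [h2, Equiv.swap_apply_right, Equiv.swap_apply_right, Fin.coe_castSucc]
        · have h2 : (⟨x, hx⟩ : Fin (n + 1)) ≠ j.castSucc := by
            intro h; apply hxe; simpa using congrArg Fin.val h
          have h3 : (⟨x, hx⟩ : Fin (n + 1)) ≠ j.succ := by
            intro h; apply hxe2; simpa using congrArg Fin.val h
          rw [Equiv.swap_apply_of_ne_of_ne h2 h3, Equiv.swap_apply_of_ne_of_ne hxe hxe2]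
    · rw [hφ_fix _ x hx, sN,
        Equiv.swap_apply_of_ne_of_ne (by omega : x ≠ (j : ℕ)) (by omega : x ≠ (j : ℕ) + 1)]
  have hW : φ wfin = WN l := by
    rw [hwfin, WN, hldef, map_list_prod]
    congr 1
    simp only [List.map_ofFn]
    congr 1
    funext i
    exact hφswap (π i)
  obtain ⟨hc, hsupp, hinv⟩ := key n hn l hl
  rw [← hW] at hc hsupp hinv
  refine ⟨?_, ?_, ?_⟩
  · -- IsCycle
    obtain ⟨x0, hx0, hall⟩ := hc
    have hx0lt : x0 < n + 1 := by
      by_contra h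
      exact hx0 (hφ_fix wfin x0 h)
    refine ⟨⟨x0, hx0lt⟩, ?_, ?_⟩
    · intro h
      apply hx0
      have h2 := hφ_apply wfin ⟨x0, hx0lt⟩
      rw [h] at h2
      simpa using h2
    · intro y hy
      have hy' : φ wfin (y : ℕ) ≠ (y : ℕ) := by
        rw [hφ_apply]
        intro h
        exact hy (Fin.val_injective h)
      obtain ⟨k, hk⟩ := hall hy'
      refine ⟨k, ?_⟩
      have h3 : (φ wfin) ^ k = φ (wfin ^ k) := (map_zpow φ wfin k).symm
      rw [h3] at hk
      have h4 := hφ_apply (wfin ^ k) ⟨x0, hx0lt⟩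
      simp only [Fin.val_mk] at h4
      rw [h4] at hk
      exact Fin.val_injective hk
  · -- support
    ext x
    simp only [Equiv.Perm.mem_support, Finset.mem_univ, iff_true]
    intro h
    apply (hsupp (x : ℕ)).mpr x.isLt
    rw [hφ_apply, h]
  · -- invLength
    unfold invLength
    refine Eq.trans ?_ hinv
    refine Finset.card_bij (fun p _ => ((p.1 : ℕ), (p.2 : ℕ))) ?_ ?_ ?_
    · rintro ⟨p, q⟩ hm
      simp only [Finset.mem_filter, Finset.mem_univ, true_and] at hm
      obtain ⟨h1, h2⟩ := hm
      simp only [InvN, Finset.mem_filter, Finset.mem_product, Finset.mem_range]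
      refine ⟨⟨p.isLt, q.isLt⟩, ?_, ?_⟩
      · exact Fin.lt_def.mp h1
      · rw [hφ_apply, hφ_apply]
        exact Fin.lt_def.mp h2
    · rintro ⟨p, q⟩ _ ⟨p', q'⟩ _ heq
      simp only [Prod.mk.injEq] at heq
      obtain ⟨h1, h2⟩ := heq
      simp only [Prod.mk.injEq]
      exact ⟨Fin.val_injective h1, Fin.val_injective h2⟩
    · rintro ⟨x, y⟩ hm
      simp only [InvN, Finset.mem_filter, Finset.mem_product, Finset.mem_range] at hm
      obtain ⟨⟨hx, hy⟩, h1, h2⟩ := hm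
      refine ⟨(⟨x, hx⟩, ⟨y, hy⟩), ?_, rfl⟩
      simp only [Finset.mem_filter, Finset.mem_univ, true_and]
      constructor
      · exact Fin.lt_def.mpr h1
      · have h3 : (φ wfin) y = ((wfin ⟨y, hy⟩ : Fin (n + 1)) : ℕ) := hφ_apply wfin ⟨y, hy⟩
        have h4 : (φ wfin) x = ((wfin ⟨x, hx⟩ : Fin (n + 1)) : ℕ) := hφ_apply wfin ⟨x, hx⟩
        rw [h3, h4] at h2
        exact Fin.lt_def.mpr h2
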